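/- The curve CL2 defined by Q2(x,y,z) = (x^2+y^2-25z^2)(x+4z)·x·(x-4z)(y-3z)(y+3z)(3x-4y) has exactly 6 ordinary double points, 3 ordinary triple points, and 2 ordinary quadruple points, and no singular points of multiplicity at least 5. -/

import Mathlib

open MvPolynomial

noncomputable def conic : MvPolynomial (Fin 3) ℂ :=
  X 0 ^ 2 + X 1 ^ 2 - 25 * X 2 ^ 2

/-- The seven irreducible components of CL2: the smooth conic and six lines. -/
noncomputable def comps2 : Fin 7 → MvPolynomial (Fin 3) ℂ :=
  ![conic, X 0 + 4 * X 2, X 0, X 0 - 4 * X 2, X 1 - 3 * X 2, X 1 + 3 * X 2,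
    3 * X 0 - 4 * X 1]

/-- The number of components of CL2 passing through a projective point. -/
noncomputable def mult2 (p : Projectivization ℂ (Fin 3 → ℂ)) : ℕ :=
  (Finset.univ.filter fun i : Fin 7 => eval p.rep (comps2 i) = 0).card

/-- Gradient of a polynomial at a point. -/
noncomputable def grad (f : MvPolynomial (Fin 3) ℂ) (p : Fin 3 → ℂ) : Fin 3 → ℂ :=
  fun k => eval p (pderiv k f)

-- ### Auxiliary definitions and lemmas

lemma pd3 (k : Fin 3) : pderiv k (3 : MvPolynomial (Fin 3) ℂ) = 0 := by
  rw [← map_ofNat (C : ℂ →+* MvPolynomial (Fin 3) ℂ) 3, pderiv_C]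

lemma pd4 (k : Fin 3) : pderiv k (4 : MvPolynomial (Fin 3) ℂ) = 0 := by
  rw [← map_ofNat (C : ℂ →+* MvPolynomial (Fin 3) ℂ) 4, pderiv_C]

lemma pd25 (k : Fin 3) : pderiv k (25 : MvPolynomial (Fin 3) ℂ) = 0 := by
  rw [← map_ofNat (C : ℂ →+* MvPolynomial (Fin 3) ℂ) 25, pderiv_C]

def E (v : Fin 3 → ℂ) : Fin 7 → ℂ :=
  ![v 0 ^ 2 + v 1 ^ 2 - 25 * v 2 ^ 2, v 0 + 4 * v 2, v 0, v 0 - 4 * v 2,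
    v 1 - 3 * v 2, v 1 + 3 * v 2, 3 * v 0 - 4 * v 1]

lemma eval_comps (v : Fin 3 → ℂ) (i : Fin 7) : eval v (comps2 i) = E v i := by
  fin_cases i
  · show eval v (X 0 ^ 2 + X 1 ^ 2 - 25 * X 2 ^ 2) = v 0 ^ 2 + v 1 ^ 2 - 25 * v 2 ^ 2; simp
  · show eval v (X 0 + 4 * X 2) = v 0 + 4 * v 2; simp
  · show eval v (X 0) = v 0; simp
  · show eval v (X 0 - 4 * X 2) = v 0 - 4 * v 2; simp
  · show eval v (X 1 - 3 * X 2) = v 1 - 3 * v 2; simp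
  · show eval v (X 1 + 3 * X 2) = v 1 + 3 * v 2; simp
  · show eval v (3 * X 0 - 4 * X 1) = 3 * v 0 - 4 * v 1; simp

def G (v : Fin 3 → ℂ) : Fin 7 → Fin 3 → ℂ :=
  ![![2 * v 0, 2 * v 1, -50 * v 2], ![1, 0, 4], ![1, 0, 0], ![1, 0, -4],
    ![0, 1, -3], ![0, 1, 3], ![3, -4, 0]]

lemma grad_comps (v : Fin 3 → ℂ) (i : Fin 7) : grad (comps2 i) v = G v i := by
  fin_cases i
  · show grad (X 0 ^ 2 + X 1 ^ 2 - 25 * X 2 ^ 2) v = ![2 * v 0, 2 * v 1, -50 * v 2]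
    funext k; fin_cases k <;>
      simp [grad, pderiv_X, Pi.single_apply, pd25] <;> ring
  · show grad (X 0 + 4 * X 2) v = ![1, 0, 4]
    funext k; fin_cases k <;> simp [grad, pderiv_X, Pi.single_apply, pd4]
  · show grad (X 0) v = ![1, 0, 0]
    funext k; fin_cases k <;> simp [grad, pderiv_X, Pi.single_apply]
  · show grad (X 0 - 4 * X 2) v = ![1, 0, -4]
    funext k; fin_cases k <;> simp [grad, pderiv_X, Pi.single_apply, pd4]
  · show grad (X 1 - 3 * X 2) v = ![0, 1, -3]
    funext k; fin_cases k <;> simp [grad, pderiv_X, Pi.single_apply, pd3]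
  · show grad (X 1 + 3 * X 2) v = ![0, 1, 3]
    funext k; fin_cases k <;> simp [grad, pderiv_X, Pi.single_apply, pd3]
  · show grad (3 * X 0 - 4 * X 1) v = ![3, -4, 0]
    funext k; fin_cases k <;> simp [grad, pderiv_X, Pi.single_apply, pd3, pd4]

lemma E_smul (a : ℂ) (v : Fin 3 → ℂ) (i : Fin 7) :
    E (a • v) i = ![a ^ 2, a, a, a, a, a, a] i * E v i := by
  have h : ∀ k : Fin 3, (a • v) k = a * v k := fun k => rfl
  fin_cases i
  · show (a • v) 0 ^ 2 + (a • v) 1 ^ 2 - 25 * (a • v) 2 ^ 2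
        = a ^ 2 * (v 0 ^ 2 + v 1 ^ 2 - 25 * v 2 ^ 2)
    simp only [h]; ring
  · show (a • v) 0 + 4 * (a • v) 2 = a * (v 0 + 4 * v 2); simp only [h]; ring
  · show (a • v) 0 = a * v 0; simp only [h]
  · show (a • v) 0 - 4 * (a • v) 2 = a * (v 0 - 4 * v 2); simp only [h]; ring
  · show (a • v) 1 - 3 * (a • v) 2 = a * (v 1 - 3 * v 2); simp only [h]; ring
  · show (a • v) 1 + 3 * (a • v) 2 = a * (v 1 + 3 * v 2); simp only [h]; ring
  · show 3 * (a • v) 0 - 4 * (a • v) 1 = a * (3 * v 0 - 4 * v 1); simp only [h]; ring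

lemma E_smul_eq_zero (a : ℂ) (ha : a ≠ 0) (v : Fin 3 → ℂ) (i : Fin 7) :
    E (a • v) i = 0 ↔ E v i = 0 := by
  rw [E_smul]
  have hc : (![a ^ 2, a, a, a, a, a, a] : Fin 7 → ℂ) i ≠ 0 := by
    fin_cases i
    · exact pow_ne_zero 2 ha
    all_goals exact ha
  constructor
  · intro h
    rcases mul_eq_zero.1 h with h | h
    · exact absurd h hc
    · exact h
  · intro h; rw [h, mul_zero]

lemma mult2_mk (w : Fin 3 → ℂ) (hw : w ≠ 0) :
    mult2 (Projectivization.mk ℂ w hw) = (Finset.univ.filter fun i => E w i = 0).card := by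
  obtain ⟨a, ha⟩ := Projectivization.exists_smul_eq_mk_rep ℂ w hw
  unfold mult2
  have he : ∀ i : Fin 7,
      (eval (Projectivization.mk ℂ w hw).rep (comps2 i) = 0) ↔ (E w i = 0) := by
    intro i
    rw [eval_comps, ← ha]
    exact E_smul_eq_zero a (Units.ne_zero a) w i
  simp only [he]

lemma vz (v : Fin 3 → ℂ) (h0 : v 0 = 0) (h1 : v 1 = 0) (h2 : v 2 = 0) : v = 0 := by
  funext m
  fin_cases m
  · exact h0
  · exact h1
  · exact h2

def P : Fin 11 → Fin 3 → ℂ := ![![0, 1, 0], ![(-4), 3, 1], ![4, (-3), 1], ![4, 3, 1], ![(-4), (-3), 1], ![1, 0, 0], ![0, 0, 1], ![0, 5, 1], ![0, (-5), 1], ![0, 3, 1], ![0, (-3), 1]]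

def M : Fin 11 → ℕ := ![3, 3, 3, 4, 4, 2, 2, 2, 2, 2, 2]

lemma Pne : ∀ k : Fin 11, P k ≠ 0 := by
  intro k h
  fin_cases k
  · exact one_ne_zero (congrFun h 1 : (1 : ℂ) = 0)
  · exact one_ne_zero (congrFun h 2 : (1 : ℂ) = 0)
  · exact one_ne_zero (congrFun h 2 : (1 : ℂ) = 0)
  · exact one_ne_zero (congrFun h 2 : (1 : ℂ) = 0)
  · exact one_ne_zero (congrFun h 2 : (1 : ℂ) = 0)
  · exact one_ne_zero (congrFun h 0 : (1 : ℂ) = 0)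
  · exact one_ne_zero (congrFun h 2 : (1 : ℂ) = 0)
  · exact one_ne_zero (congrFun h 2 : (1 : ℂ) = 0)
  · exact one_ne_zero (congrFun h 2 : (1 : ℂ) = 0)
  · exact one_ne_zero (congrFun h 2 : (1 : ℂ) = 0)
  · exact one_ne_zero (congrFun h 2 : (1 : ℂ) = 0)

noncomputable def q (k : Fin 11) : Projectivization ℂ (Fin 3 → ℂ) :=
  Projectivization.mk ℂ (P k) (Pne k)

lemma wit (v : Fin 3 → ℂ) (k : Fin 11) (c a b d : ℂ)
    (hP : P k = ![a, b, d]) (h0 : v 0 = c * a) (h1 : v 1 = c * b) (h2 : v 2 = c * d) :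
    ∃ k : Fin 11, ∃ c : ℂ, c • P k = v := by
  refine ⟨k, c, ?_⟩
  rw [hP]
  funext m
  fin_cases m
  · exact h0.symm
  · exact h1.symm
  · exact h2.symm

lemma c01 (v : Fin 3 → ℂ) (h1 : E v 0 = 0) (h2 : E v 1 = 0) :
    ∃ k : Fin 11, ∃ c : ℂ, c • P k = v := by
  have e1 : v 0 ^ 2 + v 1 ^ 2 - 25 * v 2 ^ 2 = 0 := h1
  have e2 : v 0 + 4 * v 2 = 0 := h2
  have hq : (v 1 - 3 * v 2) * (v 1 + 3 * v 2) = 0 := by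
    linear_combination e1 - (v 0 - 4 * v 2) * e2
  rcases mul_eq_zero.1 hq with h | h
  · exact wit v 1 (v 2) (-4) 3 1 rfl (by linear_combination e2) (by linear_combination h) (by ring)
  · exact wit v 4 (v 2) (-4) (-3) 1 rfl (by linear_combination e2) (by linear_combination h) (by ring)

lemma c02 (v : Fin 3 → ℂ) (h1 : E v 0 = 0) (h2 : E v 2 = 0) :
    ∃ k : Fin 11, ∃ c : ℂ, c • P k = v := by
  have e1 : v 0 ^ 2 + v 1 ^ 2 - 25 * v 2 ^ 2 = 0 := h1
  have e2 : v 0 = 0 := h2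
  have hq : (v 1 - 5 * v 2) * (v 1 + 5 * v 2) = 0 := by
    linear_combination e1 - v 0 * e2
  rcases mul_eq_zero.1 hq with h | h
  · exact wit v 7 (v 2) 0 5 1 rfl (by linear_combination e2) (by linear_combination h) (by ring)
  · exact wit v 8 (v 2) 0 (-5) 1 rfl (by linear_combination e2) (by linear_combination h) (by ring)

lemma c03 (v : Fin 3 → ℂ) (h1 : E v 0 = 0) (h2 : E v 3 = 0) :
    ∃ k : Fin 11, ∃ c : ℂ, c • P k = v := by
  have e1 : v 0 ^ 2 + v 1 ^ 2 - 25 * v 2 ^ 2 = 0 := h1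
  have e2 : v 0 - 4 * v 2 = 0 := h2
  have hq : (v 1 - 3 * v 2) * (v 1 + 3 * v 2) = 0 := by
    linear_combination e1 - (v 0 + 4 * v 2) * e2
  rcases mul_eq_zero.1 hq with h | h
  · exact wit v 3 (v 2) 4 3 1 rfl (by linear_combination e2) (by linear_combination h) (by ring)
  · exact wit v 2 (v 2) 4 (-3) 1 rfl (by linear_combination e2) (by linear_combination h) (by ring)

lemma c04 (v : Fin 3 → ℂ) (h1 : E v 0 = 0) (h2 : E v 4 = 0) :
    ∃ k : Fin 11, ∃ c : ℂ, c • P k = v := by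
  have e1 : v 0 ^ 2 + v 1 ^ 2 - 25 * v 2 ^ 2 = 0 := h1
  have e2 : v 1 - 3 * v 2 = 0 := h2
  have hq : (v 0 - 4 * v 2) * (v 0 + 4 * v 2) = 0 := by
    linear_combination e1 - (v 1 + 3 * v 2) * e2
  rcases mul_eq_zero.1 hq with h | h
  · exact wit v 3 (v 2) 4 3 1 rfl (by linear_combination h) (by linear_combination e2) (by ring)
  · exact wit v 1 (v 2) (-4) 3 1 rfl (by linear_combination h) (by linear_combination e2) (by ring)

lemma c05 (v : Fin 3 → ℂ) (h1 : E v 0 = 0) (h2 : E v 5 = 0) :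
    ∃ k : Fin 11, ∃ c : ℂ, c • P k = v := by
  have e1 : v 0 ^ 2 + v 1 ^ 2 - 25 * v 2 ^ 2 = 0 := h1
  have e2 : v 1 + 3 * v 2 = 0 := h2
  have hq : (v 0 - 4 * v 2) * (v 0 + 4 * v 2) = 0 := by
    linear_combination e1 - (v 1 - 3 * v 2) * e2
  rcases mul_eq_zero.1 hq with h | h
  · exact wit v 2 (v 2) 4 (-3) 1 rfl (by linear_combination h) (by linear_combination e2) (by ring)
  · exact wit v 4 (v 2) (-4) (-3) 1 rfl (by linear_combination h) (by linear_combination e2) (by ring)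

lemma c06 (v : Fin 3 → ℂ) (h1 : E v 0 = 0) (h2 : E v 6 = 0) :
    ∃ k : Fin 11, ∃ c : ℂ, c • P k = v := by
  have e1 : v 0 ^ 2 + v 1 ^ 2 - 25 * v 2 ^ 2 = 0 := h1
  have e2 : 3 * v 0 - 4 * v 1 = 0 := h2
  have hq : (v 1 - 3 * v 2) * (v 1 + 3 * v 2) = 0 := by
    linear_combination (9/25 : ℂ) * e1 - ((3 * v 0 + 4 * v 1) / 25) * e2
  rcases mul_eq_zero.1 hq with h | h
  · have hx : v 0 - 4 * v 2 = 0 := by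
      linear_combination (1/3 : ℂ) * e2 + (4/3 : ℂ) * h
    exact wit v 3 (v 2) 4 3 1 rfl (by linear_combination hx) (by linear_combination h) (by ring)
  · have hx : v 0 + 4 * v 2 = 0 := by
      linear_combination (1/3 : ℂ) * e2 + (4/3 : ℂ) * h
    exact wit v 4 (v 2) (-4) (-3) 1 rfl (by linear_combination hx) (by linear_combination h) (by ring)

lemma c12 (v : Fin 3 → ℂ) (h1 : E v 1 = 0) (h2 : E v 2 = 0) :
    ∃ k : Fin 11, ∃ c : ℂ, c • P k = v := by
  have e1 : v 0 + 4 * v 2 = 0 := h1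
  have e2 : v 0 = 0 := h2
  have hz : v 2 = 0 := by linear_combination (1/4 : ℂ) * e1 - (1/4 : ℂ) * e2
  exact wit v 0 (v 1) 0 1 0 rfl (by linear_combination e2) (by ring) (by linear_combination hz)

lemma c13 (v : Fin 3 → ℂ) (h1 : E v 1 = 0) (h2 : E v 3 = 0) :
    ∃ k : Fin 11, ∃ c : ℂ, c • P k = v := by
  have e1 : v 0 + 4 * v 2 = 0 := h1
  have e2 : v 0 - 4 * v 2 = 0 := h2
  have hx : v 0 = 0 := by linear_combination (1/2 : ℂ) * e1 + (1/2 : ℂ) * e2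
  have hz : v 2 = 0 := by linear_combination (1/8 : ℂ) * e1 - (1/8 : ℂ) * e2
  exact wit v 0 (v 1) 0 1 0 rfl (by linear_combination hx) (by ring) (by linear_combination hz)

lemma c14 (v : Fin 3 → ℂ) (h1 : E v 1 = 0) (h2 : E v 4 = 0) :
    ∃ k : Fin 11, ∃ c : ℂ, c • P k = v := by
  have e1 : v 0 + 4 * v 2 = 0 := h1
  have e2 : v 1 - 3 * v 2 = 0 := h2
  exact wit v 1 (v 2) (-4) 3 1 rfl (by linear_combination e1) (by linear_combination e2) (by ring)

lemma c15 (v : Fin 3 → ℂ) (h1 : E v 1 = 0) (h2 : E v 5 = 0) :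
    ∃ k : Fin 11, ∃ c : ℂ, c • P k = v := by
  have e1 : v 0 + 4 * v 2 = 0 := h1
  have e2 : v 1 + 3 * v 2 = 0 := h2
  exact wit v 4 (v 2) (-4) (-3) 1 rfl (by linear_combination e1) (by linear_combination e2) (by ring)

lemma c16 (v : Fin 3 → ℂ) (h1 : E v 1 = 0) (h2 : E v 6 = 0) :
    ∃ k : Fin 11, ∃ c : ℂ, c • P k = v := by
  have e1 : v 0 + 4 * v 2 = 0 := h1
  have e2 : 3 * v 0 - 4 * v 1 = 0 := h2
  have hy : v 1 + 3 * v 2 = 0 := by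
    linear_combination (3/4 : ℂ) * e1 - (1/4 : ℂ) * e2
  exact wit v 4 (v 2) (-4) (-3) 1 rfl (by linear_combination e1) (by linear_combination hy) (by ring)

lemma c23 (v : Fin 3 → ℂ) (h1 : E v 2 = 0) (h2 : E v 3 = 0) :
    ∃ k : Fin 11, ∃ c : ℂ, c • P k = v := by
  have e1 : v 0 = 0 := h1
  have e2 : v 0 - 4 * v 2 = 0 := h2
  have hz : v 2 = 0 := by linear_combination (1/4 : ℂ) * e1 - (1/4 : ℂ) * e2
  exact wit v 0 (v 1) 0 1 0 rfl (by linear_combination e1) (by ring) (by linear_combination hz)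

lemma c24 (v : Fin 3 → ℂ) (h1 : E v 2 = 0) (h2 : E v 4 = 0) :
    ∃ k : Fin 11, ∃ c : ℂ, c • P k = v := by
  have e1 : v 0 = 0 := h1
  have e2 : v 1 - 3 * v 2 = 0 := h2
  exact wit v 9 (v 2) 0 3 1 rfl (by linear_combination e1) (by linear_combination e2) (by ring)

lemma c25 (v : Fin 3 → ℂ) (h1 : E v 2 = 0) (h2 : E v 5 = 0) :
    ∃ k : Fin 11, ∃ c : ℂ, c • P k = v := by
  have e1 : v 0 = 0 := h1
  have e2 : v 1 + 3 * v 2 = 0 := h2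
  exact wit v 10 (v 2) 0 (-3) 1 rfl (by linear_combination e1) (by linear_combination e2) (by ring)

lemma c26 (v : Fin 3 → ℂ) (h1 : E v 2 = 0) (h2 : E v 6 = 0) :
    ∃ k : Fin 11, ∃ c : ℂ, c • P k = v := by
  have e1 : v 0 = 0 := h1
  have e2 : 3 * v 0 - 4 * v 1 = 0 := h2
  have hy : v 1 = 0 := by linear_combination (3/4 : ℂ) * e1 - (1/4 : ℂ) * e2
  exact wit v 6 (v 2) 0 0 1 rfl (by linear_combination e1) (by linear_combination hy) (by ring)

lemma c34 (v : Fin 3 → ℂ) (h1 : E v 3 = 0) (h2 : E v 4 = 0) :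
    ∃ k : Fin 11, ∃ c : ℂ, c • P k = v := by
  have e1 : v 0 - 4 * v 2 = 0 := h1
  have e2 : v 1 - 3 * v 2 = 0 := h2
  exact wit v 3 (v 2) 4 3 1 rfl (by linear_combination e1) (by linear_combination e2) (by ring)

lemma c35 (v : Fin 3 → ℂ) (h1 : E v 3 = 0) (h2 : E v 5 = 0) :
    ∃ k : Fin 11, ∃ c : ℂ, c • P k = v := by
  have e1 : v 0 - 4 * v 2 = 0 := h1
  have e2 : v 1 + 3 * v 2 = 0 := h2
  exact wit v 2 (v 2) 4 (-3) 1 rfl (by linear_combination e1) (by linear_combination e2) (by ring)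

lemma c36 (v : Fin 3 → ℂ) (h1 : E v 3 = 0) (h2 : E v 6 = 0) :
    ∃ k : Fin 11, ∃ c : ℂ, c • P k = v := by
  have e1 : v 0 - 4 * v 2 = 0 := h1
  have e2 : 3 * v 0 - 4 * v 1 = 0 := h2
  have hy : v 1 - 3 * v 2 = 0 := by
    linear_combination (3/4 : ℂ) * e1 - (1/4 : ℂ) * e2
  exact wit v 3 (v 2) 4 3 1 rfl (by linear_combination e1) (by linear_combination hy) (by ring)

lemma c45 (v : Fin 3 → ℂ) (h1 : E v 4 = 0) (h2 : E v 5 = 0) :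
    ∃ k : Fin 11, ∃ c : ℂ, c • P k = v := by
  have e1 : v 1 - 3 * v 2 = 0 := h1
  have e2 : v 1 + 3 * v 2 = 0 := h2
  have hy : v 1 = 0 := by linear_combination (1/2 : ℂ) * e1 + (1/2 : ℂ) * e2
  have hz : v 2 = 0 := by linear_combination (1/6 : ℂ) * e2 - (1/6 : ℂ) * e1
  exact wit v 5 (v 0) 1 0 0 rfl (by ring) (by linear_combination hy) (by linear_combination hz)

lemma c46 (v : Fin 3 → ℂ) (h1 : E v 4 = 0) (h2 : E v 6 = 0) :
    ∃ k : Fin 11, ∃ c : ℂ, c • P k = v := by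
  have e1 : v 1 - 3 * v 2 = 0 := h1
  have e2 : 3 * v 0 - 4 * v 1 = 0 := h2
  have hx : v 0 - 4 * v 2 = 0 := by
    linear_combination (1/3 : ℂ) * e2 + (4/3 : ℂ) * e1
  exact wit v 3 (v 2) 4 3 1 rfl (by linear_combination hx) (by linear_combination e1) (by ring)

lemma c56 (v : Fin 3 → ℂ) (h1 : E v 5 = 0) (h2 : E v 6 = 0) :
    ∃ k : Fin 11, ∃ c : ℂ, c • P k = v := by
  have e1 : v 1 + 3 * v 2 = 0 := h1
  have e2 : 3 * v 0 - 4 * v 1 = 0 := h2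
  have hx : v 0 + 4 * v 2 = 0 := by
    linear_combination (1/3 : ℂ) * e2 + (4/3 : ℂ) * e1
  exact wit v 4 (v 2) (-4) (-3) 1 rfl (by linear_combination hx) (by linear_combination e1) (by ring)

lemma li_aux (u w : Fin 3 → ℂ)
    (h : u 0 * w 1 - u 1 * w 0 ≠ 0 ∨ u 0 * w 2 - u 2 * w 0 ≠ 0 ∨
      u 1 * w 2 - u 2 * w 1 ≠ 0) :
    LinearIndependent ℂ ![u, w] := by
  rw [LinearIndependent.pair_iff]
  intro s t hst
  have h0 : s * u 0 + t * w 0 = 0 := congrFun hst 0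
  have h1 : s * u 1 + t * w 1 = 0 := congrFun hst 1
  have h2 : s * u 2 + t * w 2 = 0 := congrFun hst 2
  rcases h with h | h | h
  · constructor
    · have hs : s * (u 0 * w 1 - u 1 * w 0) = 0 := by linear_combination w 1 * h0 - w 0 * h1
      exact (mul_eq_zero.1 hs).resolve_right h
    · have ht : t * (u 0 * w 1 - u 1 * w 0) = 0 := by linear_combination u 0 * h1 - u 1 * h0
      exact (mul_eq_zero.1 ht).resolve_right h
  · constructor
    · have hs : s * (u 0 * w 2 - u 2 * w 0) = 0 := by linear_combination w 2 * h0 - w 0 * h2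
      exact (mul_eq_zero.1 hs).resolve_right h
    · have ht : t * (u 0 * w 2 - u 2 * w 0) = 0 := by linear_combination u 0 * h2 - u 2 * h0
      exact (mul_eq_zero.1 ht).resolve_right h
  · constructor
    · have hs : s * (u 1 * w 2 - u 2 * w 1) = 0 := by linear_combination w 2 * h1 - w 1 * h2
      exact (mul_eq_zero.1 hs).resolve_right h
    · have ht : t * (u 1 * w 2 - u 2 * w 1) = 0 := by linear_combination u 1 * h2 - u 2 * h1
      exact (mul_eq_zero.1 ht).resolve_right h

lemma classify (v : Fin 3 → ℂ) (i j : Fin 7) (hij : i ≠ j)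
    (hi : E v i = 0) (hj : E v j = 0) :
    ∃ k : Fin 11, ∃ c : ℂ, c • P k = v := by
  fin_cases i <;> fin_cases j
  · exact absurd rfl hij
  · exact c01 v hi hj
  · exact c02 v hi hj
  · exact c03 v hi hj
  · exact c04 v hi hj
  · exact c05 v hi hj
  · exact c06 v hi hj
  · exact c01 v hj hi
  · exact absurd rfl hij
  · exact c12 v hi hj
  · exact c13 v hi hj
  · exact c14 v hi hj
  · exact c15 v hi hj
  · exact c16 v hi hj
  · exact c02 v hj hi
  · exact c12 v hj hi
  · exact absurd rfl hij
  · exact c23 v hi hj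
  · exact c24 v hi hj
  · exact c25 v hi hj
  · exact c26 v hi hj
  · exact c03 v hj hi
  · exact c13 v hj hi
  · exact c23 v hj hi
  · exact absurd rfl hij
  · exact c34 v hi hj
  · exact c35 v hi hj
  · exact c36 v hi hj
  · exact c04 v hj hi
  · exact c14 v hj hi
  · exact c24 v hj hi
  · exact c34 v hj hi
  · exact absurd rfl hij
  · exact c45 v hi hj
  · exact c46 v hi hj
  · exact c05 v hj hi
  · exact c15 v hj hi
  · exact c25 v hj hi
  · exact c35 v hj hi
  · exact c45 v hj hi
  · exact absurd rfl hij
  · exact c56 v hi hj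
  · exact c06 v hj hi
  · exact c16 v hj hi
  · exact c26 v hj hi
  · exact c36 v hj hi
  · exact c46 v hj hi
  · exact c56 v hj hi
  · exact absurd rfl hij

lemma mem_points (p : Projectivization ℂ (Fin 3 → ℂ)) (h : 2 ≤ mult2 p) :
    ∃ k : Fin 11, p = q k := by
  have h1 : 1 < (Finset.univ.filter fun i : Fin 7 => eval p.rep (comps2 i) = 0).card := h
  obtain ⟨i, hi, j, hj, hij⟩ := Finset.one_lt_card.1 h1
  rw [Finset.mem_filter] at hi hj
  obtain ⟨k, c, hc⟩ := classify p.rep i j hij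
    (by rw [← eval_comps]; exact hi.2) (by rw [← eval_comps]; exact hj.2)
  refine ⟨k, ?_⟩
  rw [← Projectivization.mk_rep p]
  exact (Projectivization.mk_eq_mk_iff' ℂ _ _ _ _).2 ⟨c, hc⟩

lemma m0 : ∀ h, mult2 (Projectivization.mk ℂ (![0, 1, 0] : Fin 3 → ℂ) h) = 3 := by
  intro h
  rw [mult2_mk, Finset.card_filter]
  simp only [Fin.sum_univ_succ, Finset.sum_empty]
  norm_num [E, Matrix.cons_val_two, Matrix.vecHead, Matrix.vecTail]

lemma m1 : ∀ h, mult2 (Projectivization.mk ℂ (![(-4), 3, 1] : Fin 3 → ℂ) h) = 3 := by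
  intro h
  rw [mult2_mk, Finset.card_filter]
  simp only [Fin.sum_univ_succ, Finset.sum_empty]
  norm_num [E, Matrix.cons_val_two, Matrix.vecHead, Matrix.vecTail]

lemma m2 : ∀ h, mult2 (Projectivization.mk ℂ (![4, (-3), 1] : Fin 3 → ℂ) h) = 3 := by
  intro h
  rw [mult2_mk, Finset.card_filter]
  simp only [Fin.sum_univ_succ, Finset.sum_empty]
  norm_num [E, Matrix.cons_val_two, Matrix.vecHead, Matrix.vecTail]

lemma m3 : ∀ h, mult2 (Projectivization.mk ℂ (![4, 3, 1] : Fin 3 → ℂ) h) = 4 := by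
  intro h
  rw [mult2_mk, Finset.card_filter]
  simp only [Fin.sum_univ_succ, Finset.sum_empty]
  norm_num [E, Matrix.cons_val_two, Matrix.vecHead, Matrix.vecTail]

lemma m4 : ∀ h, mult2 (Projectivization.mk ℂ (![(-4), (-3), 1] : Fin 3 → ℂ) h) = 4 := by
  intro h
  rw [mult2_mk, Finset.card_filter]
  simp only [Fin.sum_univ_succ, Finset.sum_empty]
  norm_num [E, Matrix.cons_val_two, Matrix.vecHead, Matrix.vecTail]

lemma m5 : ∀ h, mult2 (Projectivization.mk ℂ (![1, 0, 0] : Fin 3 → ℂ) h) = 2 := by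
  intro h
  rw [mult2_mk, Finset.card_filter]
  simp only [Fin.sum_univ_succ, Finset.sum_empty]
  norm_num [E, Matrix.cons_val_two, Matrix.vecHead, Matrix.vecTail]

lemma m6 : ∀ h, mult2 (Projectivization.mk ℂ (![0, 0, 1] : Fin 3 → ℂ) h) = 2 := by
  intro h
  rw [mult2_mk, Finset.card_filter]
  simp only [Fin.sum_univ_succ, Finset.sum_empty]
  norm_num [E, Matrix.cons_val_two, Matrix.vecHead, Matrix.vecTail]

lemma m7 : ∀ h, mult2 (Projectivization.mk ℂ (![0, 5, 1] : Fin 3 → ℂ) h) = 2 := by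
  intro h
  rw [mult2_mk, Finset.card_filter]
  simp only [Fin.sum_univ_succ, Finset.sum_empty]
  norm_num [E, Matrix.cons_val_two, Matrix.vecHead, Matrix.vecTail]

lemma m8 : ∀ h, mult2 (Projectivization.mk ℂ (![0, (-5), 1] : Fin 3 → ℂ) h) = 2 := by
  intro h
  rw [mult2_mk, Finset.card_filter]
  simp only [Fin.sum_univ_succ, Finset.sum_empty]
  norm_num [E, Matrix.cons_val_two, Matrix.vecHead, Matrix.vecTail]

lemma m9 : ∀ h, mult2 (Projectivization.mk ℂ (![0, 3, 1] : Fin 3 → ℂ) h) = 2 := by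
  intro h
  rw [mult2_mk, Finset.card_filter]
  simp only [Fin.sum_univ_succ, Finset.sum_empty]
  norm_num [E, Matrix.cons_val_two, Matrix.vecHead, Matrix.vecTail]

lemma m10 : ∀ h, mult2 (Projectivization.mk ℂ (![0, (-3), 1] : Fin 3 → ℂ) h) = 2 := by
  intro h
  rw [mult2_mk, Finset.card_filter]
  simp only [Fin.sum_univ_succ, Finset.sum_empty]
  norm_num [E, Matrix.cons_val_two, Matrix.vecHead, Matrix.vecTail]

lemma multP (k : Fin 11) : mult2 (q k) = M k := by
  fin_cases k
  exacts [m0 _, m1 _, m2 _, m3 _, m4 _, m5 _, m6 _, m7 _, m8 _, m9 _, m10 _]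

lemma ne_q_coord {v w : Fin 3 → ℂ} {hv : v ≠ 0} {hw : w ≠ 0} (m : Fin 3)
    (h1 : v m = 0) (h2 : w m ≠ 0) :
    Projectivization.mk ℂ v hv ≠ Projectivization.mk ℂ w hw := by
  intro h
  rw [Projectivization.mk_eq_mk_iff] at h
  obtain ⟨a, ha⟩ := h
  have h3 : (a : ℂ) * w m = v m := congrFun ha m
  rw [h1] at h3
  rcases mul_eq_zero.1 h3 with h4 | h4
  · exact Units.ne_zero a h4
  · exact h2 h4

lemma ne_q_z1 {v w : Fin 3 → ℂ} {hv : v ≠ 0} {hw : w ≠ 0}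
    (hv2 : v 2 = 1) (hw2 : w 2 = 1) (m : Fin 3) (hne : v m ≠ w m) :
    Projectivization.mk ℂ v hv ≠ Projectivization.mk ℂ w hw := by
  intro h
  rw [Projectivization.mk_eq_mk_iff] at h
  obtain ⟨a, ha⟩ := h
  have h2 : (a : ℂ) * w 2 = v 2 := congrFun ha 2
  rw [hv2, hw2, mul_one] at h2
  have h3 : (a : ℂ) * w m = v m := congrFun ha m
  rw [h2, one_mul] at h3
  exact hne h3.symm

lemma d5_6 : q 5 ≠ q 6 := ne_q_coord 2 rfl one_ne_zero
lemma d5_7 : q 5 ≠ q 7 := ne_q_coord 2 rfl one_ne_zero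
lemma d5_8 : q 5 ≠ q 8 := ne_q_coord 2 rfl one_ne_zero
lemma d5_9 : q 5 ≠ q 9 := ne_q_coord 2 rfl one_ne_zero
lemma d5_10 : q 5 ≠ q 10 := ne_q_coord 2 rfl one_ne_zero
lemma d0_1 : q 0 ≠ q 1 := ne_q_coord 2 rfl one_ne_zero
lemma d0_2 : q 0 ≠ q 2 := ne_q_coord 2 rfl one_ne_zero
lemma d6_7 : q 6 ≠ q 7 := ne_q_z1 rfl rfl 1 (show (0 : ℂ) ≠ 5 by norm_num)
lemma d6_8 : q 6 ≠ q 8 := ne_q_z1 rfl rfl 1 (show (0 : ℂ) ≠ -5 by norm_num)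
lemma d6_9 : q 6 ≠ q 9 := ne_q_z1 rfl rfl 1 (show (0 : ℂ) ≠ 3 by norm_num)
lemma d6_10 : q 6 ≠ q 10 := ne_q_z1 rfl rfl 1 (show (0 : ℂ) ≠ -3 by norm_num)
lemma d7_8 : q 7 ≠ q 8 := ne_q_z1 rfl rfl 1 (show (5 : ℂ) ≠ -5 by norm_num)
lemma d7_9 : q 7 ≠ q 9 := ne_q_z1 rfl rfl 1 (show (5 : ℂ) ≠ 3 by norm_num)
lemma d7_10 : q 7 ≠ q 10 := ne_q_z1 rfl rfl 1 (show (5 : ℂ) ≠ -3 by norm_num)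
lemma d8_9 : q 8 ≠ q 9 := ne_q_z1 rfl rfl 1 (show (-5 : ℂ) ≠ 3 by norm_num)
lemma d8_10 : q 8 ≠ q 10 := ne_q_z1 rfl rfl 1 (show (-5 : ℂ) ≠ -3 by norm_num)
lemma d9_10 : q 9 ≠ q 10 := ne_q_z1 rfl rfl 1 (show (3 : ℂ) ≠ -3 by norm_num)
lemma d1_2 : q 1 ≠ q 2 := ne_q_z1 rfl rfl 0 (show (-4 : ℂ) ≠ 4 by norm_num)
lemma d3_4 : q 3 ≠ q 4 := ne_q_z1 rfl rfl 0 (show (4 : ℂ) ≠ -4 by norm_num)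

lemma set2 : {p : Projectivization ℂ (Fin 3 → ℂ) | mult2 p = 2} = {q 5, q 6, q 7, q 8, q 9, q 10} := by
  ext p
  simp only [Set.mem_setOf_eq, Set.mem_insert_iff, Set.mem_singleton_iff]
  constructor
  · intro h
    obtain ⟨k, rfl⟩ := mem_points p (by omega)
    rw [multP k] at h
    fin_cases k
    · exact absurd h (by decide)
    · exact absurd h (by decide)
    · exact absurd h (by decide)
    · exact absurd h (by decide)
    · exact absurd h (by decide)
    · exact Or.inl rfl
    · exact Or.inr (Or.inl rfl)
    · exact Or.inr (Or.inr (Or.inl rfl))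
    · exact Or.inr (Or.inr (Or.inr (Or.inl rfl)))
    · exact Or.inr (Or.inr (Or.inr (Or.inr (Or.inl rfl))))
    · exact Or.inr (Or.inr (Or.inr (Or.inr (Or.inr rfl))))
  · rintro (rfl | rfl | rfl | rfl | rfl | rfl)
    exacts [m5 _, m6 _, m7 _, m8 _, m9 _, m10 _]

lemma set3 : {p : Projectivization ℂ (Fin 3 → ℂ) | mult2 p = 3} = {q 0, q 1, q 2} := by
  ext p
  simp only [Set.mem_setOf_eq, Set.mem_insert_iff, Set.mem_singleton_iff]
  constructor
  · intro h
    obtain ⟨k, rfl⟩ := mem_points p (by omega)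
    rw [multP k] at h
    fin_cases k
    · exact Or.inl rfl
    · exact Or.inr (Or.inl rfl)
    · exact Or.inr (Or.inr rfl)
    · exact absurd h (by decide)
    · exact absurd h (by decide)
    · exact absurd h (by decide)
    · exact absurd h (by decide)
    · exact absurd h (by decide)
    · exact absurd h (by decide)
    · exact absurd h (by decide)
    · exact absurd h (by decide)
  · rintro (rfl | rfl | rfl)
    exacts [m0 _, m1 _, m2 _]

lemma set4 : {p : Projectivization ℂ (Fin 3 → ℂ) | mult2 p = 4} = {q 3, q 4} := by
  ext p
  simp only [Set.mem_setOf_eq, Set.mem_insert_iff, Set.mem_singleton_iff]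
  constructor
  · intro h
    obtain ⟨k, rfl⟩ := mem_points p (by omega)
    rw [multP k] at h
    fin_cases k
    · exact absurd h (by decide)
    · exact absurd h (by decide)
    · exact absurd h (by decide)
    · exact Or.inl rfl
    · exact Or.inr rfl
    · exact absurd h (by decide)
    · exact absurd h (by decide)
    · exact absurd h (by decide)
    · exact absurd h (by decide)
    · exact absurd h (by decide)
    · exact absurd h (by decide)
  · rintro (rfl | rfl)
    exacts [m3 _, m4 _]

/-- CL2 has exactly 6 ordinary double points, 3 ordinary triple points, 2 ordinary
quadruple points, and no singular point of multiplicity at least 5; moreover any two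
components meet transversally at every common point. -/
theorem stmt_13 :
    {p : Projectivization ℂ (Fin 3 → ℂ) | mult2 p = 2}.ncard = 6 ∧
    {p : Projectivization ℂ (Fin 3 → ℂ) | mult2 p = 3}.ncard = 3 ∧
    {p : Projectivization ℂ (Fin 3 → ℂ) | mult2 p = 4}.ncard = 2 ∧
    (∀ p : Projectivization ℂ (Fin 3 → ℂ), mult2 p ≤ 4) ∧
    (∀ p : Projectivization ℂ (Fin 3 → ℂ), ∀ i j : Fin 7, i ≠ j →
      eval p.rep (comps2 i) = 0 → eval p.rep (comps2 j) = 0 →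
      LinearIndependent ℂ ![grad (comps2 i) p.rep, grad (comps2 j) p.rep]) := by
  refine ⟨?_, ?_, ?_, ?_, ?_⟩
  · rw [set2]
    rw [Set.ncard_insert_of_notMem (by simp [d5_6, d5_7, d5_8, d5_9, d5_10])]
    rw [Set.ncard_insert_of_notMem (by simp [d6_7, d6_8, d6_9, d6_10])]
    rw [Set.ncard_insert_of_notMem (by simp [d7_8, d7_9, d7_10])]
    rw [Set.ncard_insert_of_notMem (by simp [d8_9, d8_10])]
    rw [Set.ncard_insert_of_notMem (by simp [d9_10])]
    rw [Set.ncard_singleton]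
  · rw [set3]
    rw [Set.ncard_insert_of_notMem (by simp [d0_1, d0_2])]
    rw [Set.ncard_insert_of_notMem (by simp [d1_2])]
    rw [Set.ncard_singleton]
  · rw [set4]
    rw [Set.ncard_insert_of_notMem (by simp [d3_4])]
    rw [Set.ncard_singleton]
  · intro p
    by_cases h : 2 ≤ mult2 p
    · obtain ⟨k, rfl⟩ := mem_points p h
      rw [multP k]
      exact (by decide : ∀ k : Fin 11, M k ≤ 4) k
    · omega
  · intro p i j hij hi hj
    rw [eval_comps] at hi hj
    simp only [grad_comps]
    have hv : p.rep ≠ 0 := p.rep_nonzero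
    fin_cases i <;> fin_cases j
    · exact absurd rfl hij
    · have hL : p.rep 0 + 4 * p.rep 2 = 0 := hj
      have hor : p.rep 1 ≠ 0 ∨ p.rep 2 ≠ 0 := by
        by_contra hc
        push_neg at hc
        exact hv (vz p.rep (by linear_combination hL - 4 * hc.2) hc.1 hc.2)
      rcases hor with ht | ht
      · refine li_aux _ _ (Or.inl (?_))
        show ((2 * p.rep 0) * (0) - (2 * p.rep 1) * (1) : ℂ) ≠ 0
        intro h
        exact ht (by linear_combination (-1/2 : ℂ) * h)
      · refine li_aux _ _ (Or.inr (Or.inl (?_)))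
        show ((2 * p.rep 0) * (4) - (-50 * p.rep 2) * (1) : ℂ) ≠ 0
        intro h
        exact ht (by linear_combination (1/18 : ℂ) * h + (-4/9 : ℂ) * hL)
    · have hL : p.rep 0 = 0 := hj
      have hor : p.rep 1 ≠ 0 ∨ p.rep 2 ≠ 0 := by
        by_contra hc
        push_neg at hc
        exact hv (vz p.rep hL hc.1 hc.2)
      rcases hor with ht | ht
      · refine li_aux _ _ (Or.inl (?_))
        show ((2 * p.rep 0) * (0) - (2 * p.rep 1) * (1) : ℂ) ≠ 0
        intro h
        exact ht (by linear_combination (-1/2 : ℂ) * h)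
      · refine li_aux _ _ (Or.inr (Or.inl (?_)))
        show ((2 * p.rep 0) * (0) - (-50 * p.rep 2) * (1) : ℂ) ≠ 0
        intro h
        exact ht (by linear_combination (1/50 : ℂ) * h)
    · have hL : p.rep 0 - 4 * p.rep 2 = 0 := hj
      have hor : p.rep 1 ≠ 0 ∨ p.rep 2 ≠ 0 := by
        by_contra hc
        push_neg at hc
        exact hv (vz p.rep (by linear_combination hL + 4 * hc.2) hc.1 hc.2)
      rcases hor with ht | ht
      · refine li_aux _ _ (Or.inl (?_))
        show ((2 * p.rep 0) * (0) - (2 * p.rep 1) * (1) : ℂ) ≠ 0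
        intro h
        exact ht (by linear_combination (-1/2 : ℂ) * h)
      · refine li_aux _ _ (Or.inr (Or.inl (?_)))
        show ((2 * p.rep 0) * (-4) - (-50 * p.rep 2) * (1) : ℂ) ≠ 0
        intro h
        exact ht (by linear_combination (1/18 : ℂ) * h + (4/9 : ℂ) * hL)
    · have hL : p.rep 1 - 3 * p.rep 2 = 0 := hj
      have hor : p.rep 0 ≠ 0 ∨ p.rep 2 ≠ 0 := by
        by_contra hc
        push_neg at hc
        exact hv (vz p.rep hc.1 (by linear_combination hL + 3 * hc.2) hc.2)
      rcases hor with ht | ht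
      · refine li_aux _ _ (Or.inl (?_))
        show ((2 * p.rep 0) * (1) - (2 * p.rep 1) * (0) : ℂ) ≠ 0
        intro h
        exact ht (by linear_combination (1/2 : ℂ) * h)
      · refine li_aux _ _ (Or.inr (Or.inr (?_)))
        show ((2 * p.rep 1) * (-3) - (-50 * p.rep 2) * (1) : ℂ) ≠ 0
        intro h
        exact ht (by linear_combination (1/32 : ℂ) * h + (3/16 : ℂ) * hL)
    · have hL : p.rep 1 + 3 * p.rep 2 = 0 := hj
      have hor : p.rep 0 ≠ 0 ∨ p.rep 2 ≠ 0 := by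
        by_contra hc
        push_neg at hc
        exact hv (vz p.rep hc.1 (by linear_combination hL - 3 * hc.2) hc.2)
      rcases hor with ht | ht
      · refine li_aux _ _ (Or.inl (?_))
        show ((2 * p.rep 0) * (1) - (2 * p.rep 1) * (0) : ℂ) ≠ 0
        intro h
        exact ht (by linear_combination (1/2 : ℂ) * h)
      · refine li_aux _ _ (Or.inr (Or.inr (?_)))
        show ((2 * p.rep 1) * (3) - (-50 * p.rep 2) * (1) : ℂ) ≠ 0
        intro h
        exact ht (by linear_combination (1/32 : ℂ) * h + (-3/16 : ℂ) * hL)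
    · have hL : 3 * p.rep 0 - 4 * p.rep 1 = 0 := hj
      have hor : p.rep 1 ≠ 0 ∨ p.rep 2 ≠ 0 := by
        by_contra hc
        push_neg at hc
        exact hv (vz p.rep (by linear_combination (1/3 : ℂ) * hL + (4/3 : ℂ) * hc.1) hc.1 hc.2)
      rcases hor with ht | ht
      · refine li_aux _ _ (Or.inl (?_))
        show ((2 * p.rep 0) * (-4) - (2 * p.rep 1) * (3) : ℂ) ≠ 0
        intro h
        exact ht (by linear_combination (-3/50 : ℂ) * h + (-4/25 : ℂ) * hL)
      · refine li_aux _ _ (Or.inr (Or.inl (?_)))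
        show ((2 * p.rep 0) * (0) - (-50 * p.rep 2) * (3) : ℂ) ≠ 0
        intro h
        exact ht (by linear_combination (1/150 : ℂ) * h)
    · have hL : p.rep 0 + 4 * p.rep 2 = 0 := hi
      have hor : p.rep 1 ≠ 0 ∨ p.rep 2 ≠ 0 := by
        by_contra hc
        push_neg at hc
        exact hv (vz p.rep (by linear_combination hL - 4 * hc.2) hc.1 hc.2)
      rcases hor with ht | ht
      · refine li_aux _ _ (Or.inl (?_))
        show ((1) * (2 * p.rep 1) - (0) * (2 * p.rep 0) : ℂ) ≠ 0
        intro h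
        exact ht (by linear_combination (1/2 : ℂ) * h)
      · refine li_aux _ _ (Or.inr (Or.inl (?_)))
        show ((1) * (-50 * p.rep 2) - (4) * (2 * p.rep 0) : ℂ) ≠ 0
        intro h
        exact ht (by linear_combination (-1/18 : ℂ) * h + (-4/9 : ℂ) * hL)
    · exact absurd rfl hij
    · exact li_aux _ _ (Or.inr (Or.inl (show ((1) * (0) - (4) * (1) : ℂ) ≠ 0 by norm_num)))
    · exact li_aux _ _ (Or.inr (Or.inl (show ((1) * (-4) - (4) * (1) : ℂ) ≠ 0 by norm_num)))
    · exact li_aux _ _ (Or.inl (show ((1) * (1) - (0) * (0) : ℂ) ≠ 0 by norm_num))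
    · exact li_aux _ _ (Or.inl (show ((1) * (1) - (0) * (0) : ℂ) ≠ 0 by norm_num))
    · exact li_aux _ _ (Or.inl (show ((1) * (-4) - (0) * (3) : ℂ) ≠ 0 by norm_num))
    · have hL : p.rep 0 = 0 := hi
      have hor : p.rep 1 ≠ 0 ∨ p.rep 2 ≠ 0 := by
        by_contra hc
        push_neg at hc
        exact hv (vz p.rep hL hc.1 hc.2)
      rcases hor with ht | ht
      · refine li_aux _ _ (Or.inl (?_))
        show ((1) * (2 * p.rep 1) - (0) * (2 * p.rep 0) : ℂ) ≠ 0
        intro h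
        exact ht (by linear_combination (1/2 : ℂ) * h)
      · refine li_aux _ _ (Or.inr (Or.inl (?_)))
        show ((1) * (-50 * p.rep 2) - (0) * (2 * p.rep 0) : ℂ) ≠ 0
        intro h
        exact ht (by linear_combination (-1/50 : ℂ) * h)
    · exact li_aux _ _ (Or.inr (Or.inl (show ((1) * (4) - (0) * (1) : ℂ) ≠ 0 by norm_num)))
    · exact absurd rfl hij
    · exact li_aux _ _ (Or.inr (Or.inl (show ((1) * (-4) - (0) * (1) : ℂ) ≠ 0 by norm_num)))
    · exact li_aux _ _ (Or.inl (show ((1) * (1) - (0) * (0) : ℂ) ≠ 0 by norm_num))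
    · exact li_aux _ _ (Or.inl (show ((1) * (1) - (0) * (0) : ℂ) ≠ 0 by norm_num))
    · exact li_aux _ _ (Or.inl (show ((1) * (-4) - (0) * (3) : ℂ) ≠ 0 by norm_num))
    · have hL : p.rep 0 - 4 * p.rep 2 = 0 := hi
      have hor : p.rep 1 ≠ 0 ∨ p.rep 2 ≠ 0 := by
        by_contra hc
        push_neg at hc
        exact hv (vz p.rep (by linear_combination hL + 4 * hc.2) hc.1 hc.2)
      rcases hor with ht | ht
      · refine li_aux _ _ (Or.inl (?_))
        show ((1) * (2 * p.rep 1) - (0) * (2 * p.rep 0) : ℂ) ≠ 0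
        intro h
        exact ht (by linear_combination (1/2 : ℂ) * h)
      · refine li_aux _ _ (Or.inr (Or.inl (?_)))
        show ((1) * (-50 * p.rep 2) - (-4) * (2 * p.rep 0) : ℂ) ≠ 0
        intro h
        exact ht (by linear_combination (-1/18 : ℂ) * h + (4/9 : ℂ) * hL)
    · exact li_aux _ _ (Or.inr (Or.inl (show ((1) * (4) - (-4) * (1) : ℂ) ≠ 0 by norm_num)))
    · exact li_aux _ _ (Or.inr (Or.inl (show ((1) * (0) - (-4) * (1) : ℂ) ≠ 0 by norm_num)))
    · exact absurd rfl hij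
    · exact li_aux _ _ (Or.inl (show ((1) * (1) - (0) * (0) : ℂ) ≠ 0 by norm_num))
    · exact li_aux _ _ (Or.inl (show ((1) * (1) - (0) * (0) : ℂ) ≠ 0 by norm_num))
    · exact li_aux _ _ (Or.inl (show ((1) * (-4) - (0) * (3) : ℂ) ≠ 0 by norm_num))
    · have hL : p.rep 1 - 3 * p.rep 2 = 0 := hi
      have hor : p.rep 0 ≠ 0 ∨ p.rep 2 ≠ 0 := by
        by_contra hc
        push_neg at hc
        exact hv (vz p.rep hc.1 (by linear_combination hL + 3 * hc.2) hc.2)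
      rcases hor with ht | ht
      · refine li_aux _ _ (Or.inl (?_))
        show ((0) * (2 * p.rep 1) - (1) * (2 * p.rep 0) : ℂ) ≠ 0
        intro h
        exact ht (by linear_combination (-1/2 : ℂ) * h)
      · refine li_aux _ _ (Or.inr (Or.inr (?_)))
        show ((1) * (-50 * p.rep 2) - (-3) * (2 * p.rep 1) : ℂ) ≠ 0
        intro h
        exact ht (by linear_combination (-1/32 : ℂ) * h + (3/16 : ℂ) * hL)
    · exact li_aux _ _ (Or.inl (show ((0) * (0) - (1) * (1) : ℂ) ≠ 0 by norm_num))
    · exact li_aux _ _ (Or.inl (show ((0) * (0) - (1) * (1) : ℂ) ≠ 0 by norm_num))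
    · exact li_aux _ _ (Or.inl (show ((0) * (0) - (1) * (1) : ℂ) ≠ 0 by norm_num))
    · exact absurd rfl hij
    · exact li_aux _ _ (Or.inr (Or.inr (show ((1) * (3) - (-3) * (1) : ℂ) ≠ 0 by norm_num)))
    · exact li_aux _ _ (Or.inl (show ((0) * (-4) - (1) * (3) : ℂ) ≠ 0 by norm_num))
    · have hL : p.rep 1 + 3 * p.rep 2 = 0 := hi
      have hor : p.rep 0 ≠ 0 ∨ p.rep 2 ≠ 0 := by
        by_contra hc
        push_neg at hc
        exact hv (vz p.rep hc.1 (by linear_combination hL - 3 * hc.2) hc.2)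
      rcases hor with ht | ht
      · refine li_aux _ _ (Or.inl (?_))
        show ((0) * (2 * p.rep 1) - (1) * (2 * p.rep 0) : ℂ) ≠ 0
        intro h
        exact ht (by linear_combination (-1/2 : ℂ) * h)
      · refine li_aux _ _ (Or.inr (Or.inr (?_)))
        show ((1) * (-50 * p.rep 2) - (3) * (2 * p.rep 1) : ℂ) ≠ 0
        intro h
        exact ht (by linear_combination (-1/32 : ℂ) * h + (-3/16 : ℂ) * hL)
    · exact li_aux _ _ (Or.inl (show ((0) * (0) - (1) * (1) : ℂ) ≠ 0 by norm_num))
    · exact li_aux _ _ (Or.inl (show ((0) * (0) - (1) * (1) : ℂ) ≠ 0 by norm_num))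
    · exact li_aux _ _ (Or.inl (show ((0) * (0) - (1) * (1) : ℂ) ≠ 0 by norm_num))
    · exact li_aux _ _ (Or.inr (Or.inr (show ((1) * (-3) - (3) * (1) : ℂ) ≠ 0 by norm_num)))
    · exact absurd rfl hij
    · exact li_aux _ _ (Or.inl (show ((0) * (-4) - (1) * (3) : ℂ) ≠ 0 by norm_num))
    · have hL : 3 * p.rep 0 - 4 * p.rep 1 = 0 := hi
      have hor : p.rep 1 ≠ 0 ∨ p.rep 2 ≠ 0 := by
        by_contra hc
        push_neg at hc
        exact hv (vz p.rep (by linear_combination (1/3 : ℂ) * hL + (4/3 : ℂ) * hc.1) hc.1 hc.2)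
      rcases hor with ht | ht
      · refine li_aux _ _ (Or.inl (?_))
        show ((3) * (2 * p.rep 1) - (-4) * (2 * p.rep 0) : ℂ) ≠ 0
        intro h
        exact ht (by linear_combination (3/50 : ℂ) * h + (-4/25 : ℂ) * hL)
      · refine li_aux _ _ (Or.inr (Or.inl (?_)))
        show ((3) * (-50 * p.rep 2) - (0) * (2 * p.rep 0) : ℂ) ≠ 0
        intro h
        exact ht (by linear_combination (-1/150 : ℂ) * h)
    · exact li_aux _ _ (Or.inl (show ((3) * (0) - (-4) * (1) : ℂ) ≠ 0 by norm_num))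
    · exact li_aux _ _ (Or.inl (show ((3) * (0) - (-4) * (1) : ℂ) ≠ 0 by norm_num))
    · exact li_aux _ _ (Or.inl (show ((3) * (0) - (-4) * (1) : ℂ) ≠ 0 by norm_num))
    · exact li_aux _ _ (Or.inl (show ((3) * (1) - (-4) * (0) : ℂ) ≠ 0 by norm_num))
    · exact li_aux _ _ (Or.inl (show ((3) * (1) - (-4) * (0) : ℂ) ≠ 0 by norm_num))
    · exact absurd rfl hij
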